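/- Let a and b be coprime positive integers and k ≥ 1. Then R_k(a,b) = { ab(k-1) + ia + jb : 0 ≤ i ≤ b-1, 0 ≤ j ≤ a-1 }, and moreover the map (i,j) ↦ ab(k-1) + ia + jb is injective on {0,…,b-1} × {0,…,a-1}; equivalently, ∑_{j ∈ R_k(a,b)} z^j = z^{ab(k-1)} (1 + z^a + z^{2a} + ⋯ + z^{(b-1)a}) (1 + z^b + z^{2b} + ⋯ + z^{(a-1)b}). -/

import Mathlib

/-- `repCount a b j` is the number of representations of `j` in the form
`m * a + n * b` with `m, n : ℕ`. -/
noncomputable def repCount (a b j : ℕ) : ℕ :=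
  Nat.card {p : ℕ × ℕ // p.1 * a + p.2 * b = j}

lemma repCount_formula (a b : ℕ) (ha : 0 < a) (hb : 0 < b) (hab : Nat.Coprime a b)
    (q i j : ℕ) (hi : i < b) (hj : j < a) :
    repCount a b (a * b * q + i * a + j * b) = q + 1 := by
  classical
  set N := a * b * q + i * a + j * b with hN
  have key : ∀ t : Fin (q + 1),
      (i + t.1 * b) * a + (j + (q - t.1) * a) * b = N := by
    rintro ⟨t, ht⟩
    have ht' : t ≤ q := Nat.lt_succ_iff.mp ht
    obtain ⟨s, rfl⟩ := Nat.exists_eq_add_of_le ht'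
    simp only [Nat.add_sub_cancel_left, hN]
    ring
  let f : Fin (q + 1) → {p : ℕ × ℕ // p.1 * a + p.2 * b = N} :=
    fun t => ⟨(i + t.1 * b, j + (q - t.1) * a), key t⟩
  have hinj : Function.Injective f := by
    intro t t' h
    have h1 : i + t.1 * b = i + t'.1 * b := congrArg (fun x => x.1.1) h
    have h2 : t.1 * b = t'.1 * b := by omega
    exact Fin.ext (Nat.eq_of_mul_eq_mul_right hb h2)
  have hsurj : Function.Surjective f := by
    rintro ⟨⟨m, n'⟩, h⟩
    simp only [hN] at h
    have key2 : m * a + n' * b = i * a + (a * q + j) * b := by rw [h]; ring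
    have h1 : m * a ≡ i * a [MOD b] := by
      have := congrArg (· % b) key2
      exact (show m * a % b = i * a % b by simpa [Nat.add_mul_mod_self_right] using this)
    have h2 : m ≡ i [MOD b] := h1.cancel_right_of_coprime hab.symm
    have hm : m % b = i := by
      have h3 : m % b = i % b := h2
      rwa [Nat.mod_eq_of_lt hi] at h3
    set t := m / b with htdef
    have hdm := Nat.div_add_mod m b
    have hm' : m = i + t * b := by rw [← hdm, hm]; ring
    have h4 : t * a + n' = a * q + j := by
      have e1 : i * a + (t * a + n') * b = i * a + (a * q + j) * b := by
        calc i * a + (t * a + n') * b = (i + t * b) * a + n' * b := by ring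
          _ = m * a + n' * b := by rw [← hm']
          _ = i * a + (a * q + j) * b := key2
      exact Nat.eq_of_mul_eq_mul_right hb (Nat.add_left_cancel e1)
    have ht : t ≤ q := by
      by_contra hc
      push_neg at hc
      have hlt : a * q + j < t * a := by
        calc a * q + j < a * q + a := by omega
          _ = a * (q + 1) := by ring
          _ ≤ a * t := Nat.mul_le_mul_left a hc
          _ = t * a := mul_comm a t
      have h5 : t * a ≤ a * q + j := Nat.le.intro h4
      exact absurd (Nat.lt_of_le_of_lt h5 hlt) (Nat.lt_irrefl _)
    obtain ⟨s, rfl⟩ := Nat.exists_eq_add_of_le ht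
    have hn' : n' = j + s * a := by
      have e2 : t * a + n' = t * a + (j + s * a) := by rw [h4]; ring
      exact Nat.add_left_cancel e2
    refine ⟨⟨t, by omega⟩, ?_⟩
    apply Subtype.ext
    show (i + t * b, j + ((t + s) - t) * a) = (m, n')
    rw [Nat.add_sub_cancel_left, ← hm', ← hn']
  have hcard : Nat.card (Fin (q + 1)) = Nat.card {p : ℕ × ℕ // p.1 * a + p.2 * b = N} :=
    Nat.card_eq_of_bijective f ⟨hinj, hsurj⟩
  simpa [repCount] using hcard.symm

lemma exists_form (a b : ℕ) (ha : 0 < a) (hb : 0 < b) {n : ℕ} (h : Nonempty {p : ℕ × ℕ // p.1 * a + p.2 * b = n}) :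
    ∃ q i j, i < b ∧ j < a ∧ n = a * b * q + i * a + j * b := by
  obtain ⟨⟨⟨m, n'⟩, hmn⟩⟩ := h
  refine ⟨((m / b) * a + n') / a, m % b, ((m / b) * a + n') % a,
    Nat.mod_lt _ hb, Nat.mod_lt _ ha, ?_⟩
  have hdm := Nat.div_add_mod m b
  have hds := Nat.div_add_mod ((m / b) * a + n') a
  calc n = m * a + n' * b := hmn.symm
    _ = (b * (m / b) + m % b) * a + n' * b := by rw [hdm]
    _ = (m % b) * a + ((m / b) * a + n') * b := by ring
    _ = (m % b) * a + (a * (((m / b) * a + n') / a) + ((m / b) * a + n') % a) * b := by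
        rw [hds]
    _ = a * b * (((m / b) * a + n') / a) + (m % b) * a + (((m / b) * a + n') % a) * b := by
        ring

/-- For `k ≥ 1`, the set `R_k(a,b)` equals
`{ab(k-1) + i*a + j*b : 0 ≤ i ≤ b-1, 0 ≤ j ≤ a-1}`, and the map
`(i,j) ↦ ab(k-1) + i*a + j*b` is injective on `{0,…,b-1} × {0,…,a-1}`. -/
theorem Rk_eq_structured (a b k : ℕ) (ha : 0 < a) (hb : 0 < b) (hab : Nat.Coprime a b)
    (hk : 1 ≤ k) :
    {n : ℕ | repCount a b n = k} =
        (fun p : ℕ × ℕ => a * b * (k - 1) + p.1 * a + p.2 * b) '' (Set.Iio b ×ˢ Set.Iio a) ∧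
      Set.InjOn (fun p : ℕ × ℕ => a * b * (k - 1) + p.1 * a + p.2 * b)
        (Set.Iio b ×ˢ Set.Iio a) := by
  constructor
  · ext n
    simp only [Set.mem_setOf_eq, Set.mem_image, Set.mem_prod, Set.mem_Iio]
    constructor
    · intro h
      have hpos : 0 < Nat.card {p : ℕ × ℕ // p.1 * a + p.2 * b = n} := by
        rw [← repCount, h]; omega
      have hne : Nonempty {p : ℕ × ℕ // p.1 * a + p.2 * b = n} :=
        (Nat.card_pos_iff.mp hpos).1
      obtain ⟨q, i, j, hi, hj, rfl⟩ := exists_form a b ha hb hne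
      have hf := repCount_formula a b ha hb hab q i j hi hj
      have hq : q = k - 1 := by omega
      exact ⟨(i, j), ⟨hi, hj⟩, by rw [hq]⟩
    · rintro ⟨⟨i, j⟩, ⟨hi, hj⟩, rfl⟩
      have hf := repCount_formula a b ha hb hab (k - 1) i j hi hj
      rw [hf]; omega
  · rintro ⟨i, j⟩ ⟨hi, hj⟩ ⟨i', j'⟩ ⟨hi', hj'⟩ h
    simp only at h
    rw [add_assoc, add_assoc] at h
    have h' : i * a + j * b = i' * a + j' * b := Nat.add_left_cancel h
    have h1 : i * a ≡ i' * a [MOD b] := by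
      have := congrArg (· % b) h'
      exact (show i * a % b = i' * a % b by simpa [Nat.add_mul_mod_self_right] using this)
    have h2 : i ≡ i' [MOD b] := h1.cancel_right_of_coprime hab.symm
    have hii : i = i' := by
      have h3 : i % b = i' % b := h2
      rwa [Nat.mod_eq_of_lt hi, Nat.mod_eq_of_lt hi'] at h3
    subst hii
    have hjj : j * b = j' * b := by omega
    have : j = j' := Nat.eq_of_mul_eq_mul_right hb hjj
    simp [this]
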